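/- Let p be a probability density on ℝ^d, let q be a probability density with q(u) > 0 wherever p(u) > 0 and ∫ p(u)²/q(u) du ≤ C for some finite C > 0, let g, ĝ : ℝ^d → ℝ be measurable, let σ > 0, and define h⋆(u) = Φ(-g(u)/σ), ĥ(u) = Φ(-ĝ(u)/σ), Z⋆ = ∫ h⋆ p du ≥ z > 0, Ẑ = ∫ ĥ p du > 0, and the intermediate target probability measures π⋆ and π̂ with Lebesgue densities h⋆ p / Z⋆ and ĥ p / Ẑ respectively. Let Π be a map from probability measures on ℝ^d to probability measures on ℝ^d satisfying the total-variation Lipschitz property TV(Π(μ), Π(ν)) ≤ L · TV(μ, ν) for some finite L ≥ 0 and all probability measures μ, ν. Then TV(Π(π⋆), Π(π̂)) ≤ (2 L √C / (z σ √(2π))) · ( ∫ (g(u) - ĝ(u))² q(u) du )^{1/2}. -/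

import Mathlib

open MeasureTheory Set

/-- The standard normal cumulative distribution function
`Φ(x) = (1/√(2π)) ∫_{-∞}^{x} e^{-t²/2} dt`. -/
noncomputable def stdNormalCDF (x : ℝ) : ℝ :=
  (Real.sqrt (2 * Real.pi))⁻¹ * ∫ t in Set.Iic x, Real.exp (-t ^ 2 / 2)

/-- The total variation distance between two measures:
`TV(μ, ν) = sup { |μ(A) - ν(A)| : A measurable }`. -/
noncomputable def tvDist {E : Type*} [MeasurableSpace E] (μ ν : Measure E) : ℝ :=
  ⨆ s : {s : Set E // MeasurableSet s}, |(μ s.1).toReal - (ν s.1).toReal|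

lemma gauss_integrable : Integrable (fun t : ℝ => Real.exp (-t ^ 2 / 2)) := by
  have h := integrable_exp_neg_mul_sq (by norm_num : (0:ℝ) < 1/2)
  exact h.congr (by filter_upwards with x; ring_nf)

lemma gauss_total : ∫ t : ℝ, Real.exp (-t ^ 2 / 2) = Real.sqrt (2 * Real.pi) := by
  have h := integral_gaussian (1/2 : ℝ)
  rw [show Real.pi / (1/2) = 2 * Real.pi by ring] at h
  rw [← h]; congr 1; funext x; ring_nf

lemma sqrt2pi_pos : 0 < Real.sqrt (2 * Real.pi) :=
  Real.sqrt_pos.mpr (by positivity)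

lemma stdNormalCDF_nonneg (x : ℝ) : 0 ≤ stdNormalCDF x := by
  apply mul_nonneg (by positivity)
  exact integral_nonneg fun t => (Real.exp_pos _).le

lemma stdNormalCDF_le_one (x : ℝ) : stdNormalCDF x ≤ 1 := by
  rw [stdNormalCDF, inv_mul_le_iff₀ sqrt2pi_pos, mul_one, ← gauss_total]
  exact setIntegral_le_integral gauss_integrable
    (by filter_upwards with t using (Real.exp_pos _).le)

lemma stdNormalCDF_mono : Monotone stdNormalCDF := by
  intro a b hab
  apply mul_le_mul_of_nonneg_left _ (by positivity)
  apply setIntegral_mono_set gauss_integrable.integrableOn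
    (by filter_upwards with t using (Real.exp_pos _).le)
  exact HasSubset.Subset.eventuallyLE (Iic_subset_Iic.mpr hab)

lemma stdNormalCDF_measurable : Measurable stdNormalCDF :=
  stdNormalCDF_mono.measurable

lemma stdNormalCDF_lipschitz (a b : ℝ) :
    |stdNormalCDF a - stdNormalCDF b| ≤ (Real.sqrt (2 * Real.pi))⁻¹ * |a - b| := by
  wlog hab : b ≤ a generalizing a b
  · rw [abs_sub_comm, abs_sub_comm a b]; exact this b a (le_of_not_ge hab)
  rw [stdNormalCDF, stdNormalCDF, ← mul_sub, abs_mul, abs_of_nonneg (by positivity : (0:ℝ) ≤ (Real.sqrt (2*Real.pi))⁻¹)]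
  apply mul_le_mul_of_nonneg_left _ (by positivity)
  rw [intervalIntegral.integral_Iic_sub_Iic gauss_integrable.integrableOn gauss_integrable.integrableOn,
    intervalIntegral.integral_of_le hab]
  rw [abs_of_nonneg (integral_nonneg fun t => (Real.exp_pos _).le)]
  calc ∫ t in Ioc b a, Real.exp (-t ^ 2 / 2)
      ≤ ∫ _t in Ioc b a, (1:ℝ) := by
        apply setIntegral_mono_on gauss_integrable.integrableOn
          ((integrableOn_const_iff).mpr (Or.inr (by simp)))
          measurableSet_Ioc
        intro t _
        simpa using Real.exp_le_one_iff.mpr (by nlinarith [sq_nonneg t])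
    _ = a - b := by simp [Real.volume_Ioc, ENNReal.toReal_ofReal (sub_nonneg.mpr hab), hab]
    _ ≤ |a - b| := le_abs_self _

lemma amgm {d p q t : ℝ} (ht : 0 < t) (hp0 : 0 ≤ p) (hq0 : 0 ≤ q) (himp : 0 < p → 0 < q) :
    |d| * p ≤ t / 2 * (d ^ 2 * q) + 1 / (2 * t) * (p ^ 2 / q) := by
  rcases hp0.eq_or_lt with hp | hp
  · have h1 : 0 ≤ d ^ 2 * q := mul_nonneg (sq_nonneg _) hq0
    have h2 : 0 ≤ p ^ 2 / q := div_nonneg (sq_nonneg _) hq0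
    have h3 : 0 ≤ t / 2 * (d ^ 2 * q) := mul_nonneg (by positivity) h1
    have h4 : 0 ≤ 1 / (2 * t) * (p ^ 2 / q) := mul_nonneg (by positivity) h2
    rw [← hp, mul_zero]
    have h0 : (0:ℝ) ^ 2 / q = 0 := by norm_num
    rw [h0, mul_zero, add_zero]
    exact h3
  · have hq : 0 < q := himp hp
    rw [← sq_abs d]
    have expand : t / 2 * (|d| ^ 2 * q) + 1 / (2 * t) * (p ^ 2 / q) - |d| * p
        = (t * |d| * q - p) ^ 2 / (2 * t * q) := by
      field_simp
      ring
    have hnn : 0 ≤ (t * |d| * q - p) ^ 2 / (2 * t * q) :=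
      div_nonneg (sq_nonneg _) (by positivity)
    linarith

lemma tv_withDensity_le {α : Type*} [MeasurableSpace α] (μ : Measure α)
    (f₁ f₂ : α → ℝ) (h₁ : Integrable f₁ μ) (h₂ : Integrable f₂ μ)
    (h₁0 : ∀ a, 0 ≤ f₁ a) (h₂0 : ∀ a, 0 ≤ f₂ a) :
    tvDist (μ.withDensity fun a => ENNReal.ofReal (f₁ a))
      (μ.withDensity fun a => ENNReal.ofReal (f₂ a)) ≤ ∫ a, |f₁ a - f₂ a| ∂μ := by
  apply ciSup_le
  rintro ⟨s, hs⟩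
  have key : ∀ (f : α → ℝ), Integrable f μ → (∀ a, 0 ≤ f a) →
      ((μ.withDensity fun a => ENNReal.ofReal (f a)) s).toReal = ∫ a in s, f a ∂μ := by
    intro f hf hf0
    rw [withDensity_apply _ hs,
      ← ofReal_integral_eq_lintegral_ofReal hf.integrableOn
        (Filter.Eventually.of_forall hf0),
      ENNReal.toReal_ofReal (integral_nonneg hf0)]
  rw [key f₁ h₁ h₁0, key f₂ h₂ h₂0, ← integral_sub h₁.integrableOn h₂.integrableOn]
  calc |∫ a in s, (f₁ a - f₂ a) ∂μ| ≤ ∫ a in s, |f₁ a - f₂ a| ∂μ := by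
        simpa [Real.norm_eq_abs] using
          norm_integral_le_integral_norm (μ := μ.restrict s) (f := fun a => f₁ a - f₂ a)
    _ ≤ ∫ a, |f₁ a - f₂ a| ∂μ :=
        setIntegral_le_integral (h₁.sub h₂).abs
          (Filter.Eventually.of_forall fun a => abs_nonneg _)

/-- One-step proposal stability of the surrogate-driven ICE update: if the
cross-entropy projection `Proj` is `L`-Lipschitz in total variation on probability
measures, then the projections of the true and surrogate intermediate targets
`π⋆ ∝ Φ(-g/σ) p` and `π̂ ∝ Φ(-ĝ/σ) p` satisfy
`TV(Proj π⋆, Proj π̂) ≤ (2 L √C / (z σ √(2π))) (∫ (g - ĝ)² q)^{1/2}`. -/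
theorem one_step_proposal_stability
    (d : ℕ) (p q g gHat : (Fin d → ℝ) → ℝ)
    (hp : Measurable p) (hq : Measurable q) (hg : Measurable g) (hgHat : Measurable gHat)
    (hp0 : ∀ u, 0 ≤ p u) (hq0 : ∀ u, 0 ≤ q u)
    (hp1 : ∫ u, p u = 1) (hq1 : ∫ u, q u = 1)
    (hqpos : ∀ᵐ u, 0 < p u → 0 < q u)
    (C : ℝ) (hC : 0 < C)
    (hLRint : Integrable (fun u => (p u) ^ 2 / q u))
    (hLR : ∫ u, (p u) ^ 2 / q u ≤ C)
    (σ z : ℝ) (hσ : 0 < σ) (hz : 0 < z)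
    (hZstar : z ≤ ∫ u, stdNormalCDF (-(g u) / σ) * p u)
    (hZhat : 0 < ∫ u, stdNormalCDF (-(gHat u) / σ) * p u)
    (hErrInt : Integrable (fun u => (g u - gHat u) ^ 2 * q u))
    (Proj : Measure (Fin d → ℝ) → Measure (Fin d → ℝ))
    (L : ℝ) (hL0 : 0 ≤ L)
    (hProj : ∀ μ ν : Measure (Fin d → ℝ), IsProbabilityMeasure μ → IsProbabilityMeasure ν →
      tvDist (Proj μ) (Proj ν) ≤ L * tvDist μ ν) :
    tvDist
      (Proj (volume.withDensity fun u =>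
        ENNReal.ofReal (stdNormalCDF (-(g u) / σ) * p u
          / (∫ v, stdNormalCDF (-(g v) / σ) * p v))))
      (Proj (volume.withDensity fun u =>
        ENNReal.ofReal (stdNormalCDF (-(gHat u) / σ) * p u
          / (∫ v, stdNormalCDF (-(gHat v) / σ) * p v))))
      ≤ (2 * L * Real.sqrt C / (z * σ * Real.sqrt (2 * Real.pi)))
          * Real.sqrt (∫ u, (g u - gHat u) ^ 2 * q u) := by
  have hsq := sqrt2pi_pos
  have hpInt : Integrable p := by
    by_contra h
    rw [integral_undef h] at hp1; norm_num at hp1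
  have hm1 : Measurable fun u => stdNormalCDF (-(g u) / σ) :=
    stdNormalCDF_measurable.comp ((hg.neg).div_const σ)
  have hm2 : Measurable fun u => stdNormalCDF (-(gHat u) / σ) :=
    stdNormalCDF_measurable.comp ((hgHat.neg).div_const σ)
  have hInt1 : Integrable fun u => stdNormalCDF (-(g u) / σ) * p u := by
    refine hpInt.mono ((hm1.mul hp).aestronglyMeasurable) ?_
    filter_upwards with u
    rw [Real.norm_eq_abs, Real.norm_eq_abs, abs_mul,
      abs_of_nonneg (stdNormalCDF_nonneg _), abs_of_nonneg (hp0 u)]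
    exact mul_le_of_le_one_left (hp0 u) (stdNormalCDF_le_one _)
  have hInt2 : Integrable fun u => stdNormalCDF (-(gHat u) / σ) * p u := by
    refine hpInt.mono ((hm2.mul hp).aestronglyMeasurable) ?_
    filter_upwards with u
    rw [Real.norm_eq_abs, Real.norm_eq_abs, abs_mul,
      abs_of_nonneg (stdNormalCDF_nonneg _), abs_of_nonneg (hp0 u)]
    exact mul_le_of_le_one_left (hp0 u) (stdNormalCDF_le_one _)
  set Z1 := ∫ v, stdNormalCDF (-(g v) / σ) * p v with hZ1def
  set Z2 := ∫ v, stdNormalCDF (-(gHat v) / σ) * p v with hZ2def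
  have hZ1 : 0 < Z1 := lt_of_lt_of_le hz hZstar
  have hZ2 : 0 < Z2 := hZhat
  -- density functions
  have hf1Int : Integrable fun u => stdNormalCDF (-(g u) / σ) * p u / Z1 := hInt1.div_const Z1
  have hf2Int : Integrable fun u => stdNormalCDF (-(gHat u) / σ) * p u / Z2 := hInt2.div_const Z2
  have hf1nn : ∀ u, 0 ≤ stdNormalCDF (-(g u) / σ) * p u / Z1 := fun u =>
    div_nonneg (mul_nonneg (stdNormalCDF_nonneg _) (hp0 u)) hZ1.le
  have hf2nn : ∀ u, 0 ≤ stdNormalCDF (-(gHat u) / σ) * p u / Z2 := fun u =>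
    div_nonneg (mul_nonneg (stdNormalCDF_nonneg _) (hp0 u)) hZ2.le
  have hprob1 : IsProbabilityMeasure (volume.withDensity fun u =>
      ENNReal.ofReal (stdNormalCDF (-(g u) / σ) * p u / Z1)) := by
    constructor
    rw [withDensity_apply _ MeasurableSet.univ, Measure.restrict_univ,
      ← ofReal_integral_eq_lintegral_ofReal hf1Int (Filter.Eventually.of_forall hf1nn)]
    rw [integral_div, ← hZ1def, div_self hZ1.ne', ENNReal.ofReal_one]
  have hprob2 : IsProbabilityMeasure (volume.withDensity fun u =>
      ENNReal.ofReal (stdNormalCDF (-(gHat u) / σ) * p u / Z2)) := by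
    constructor
    rw [withDensity_apply _ MeasurableSet.univ, Measure.restrict_univ,
      ← ofReal_integral_eq_lintegral_ofReal hf2Int (Filter.Eventually.of_forall hf2nn)]
    rw [integral_div, ← hZ2def, div_self hZ2.ne', ENNReal.ofReal_one]
  -- error quantities
  set E := ∫ u, (g u - gHat u) ^ 2 * q u with hEdef
  have hE0 : 0 ≤ E := integral_nonneg fun u => mul_nonneg (sq_nonneg _) (hq0 u)
  have hIint : Integrable fun u => |g u - gHat u| * p u := by
    refine Integrable.mono ((hErrInt.const_mul (1/2)).add (hLRint.const_mul (1/(2*1))))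
      (((hg.sub hgHat).abs.mul hp).aestronglyMeasurable) ?_
    filter_upwards [hqpos] with u hu
    rw [Real.norm_eq_abs, Real.norm_eq_abs, abs_mul, abs_abs, abs_of_nonneg (hp0 u)]
    refine le_trans ?_ (le_abs_self _)
    have h := amgm (d := g u - gHat u) (t := 1) one_pos (hp0 u) (hq0 u) hu
    calc |g u - gHat u| * p u
        ≤ 1/2 * ((g u - gHat u) ^ 2 * q u) + 1/(2*1) * ((p u) ^ 2 / q u) := by
          simpa using h
      _ = 1/2 * ((g u - gHat u) ^ 2 * q u) + 1/(2*1) * ((p u) ^ 2 / q u) := rfl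
  have hI0 : 0 ≤ ∫ u, |g u - gHat u| * p u :=
    integral_nonneg fun u => mul_nonneg (abs_nonneg _) (hp0 u)
  have key : ∀ t : ℝ, 0 < t →
      (∫ u, |g u - gHat u| * p u) ≤ t/2 * E + 1/(2*t) * C := by
    intro t ht
    have step : (∫ u, |g u - gHat u| * p u)
        ≤ ∫ u, (t/2 * ((g u - gHat u) ^ 2 * q u) + 1/(2*t) * ((p u) ^ 2 / q u)) := by
      refine integral_mono_ae hIint ((hErrInt.const_mul _).add (hLRint.const_mul _)) ?_
      filter_upwards [hqpos] with u hu
      exact amgm ht (hp0 u) (hq0 u) hu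
    rw [integral_add (hErrInt.const_mul _) (hLRint.const_mul _),
      integral_const_mul, integral_const_mul] at step
    have h2 : 1/(2*t) * (∫ u, (p u) ^ 2 / q u) ≤ 1/(2*t) * C :=
      mul_le_mul_of_nonneg_left hLR (by positivity)
    rw [← hEdef] at step
    linarith
  have hImain : (∫ u, |g u - gHat u| * p u) ≤ Real.sqrt C * Real.sqrt E := by
    rcases hE0.eq_or_lt with hE | hE
    · rw [← hE, Real.sqrt_zero, mul_zero]
      by_contra hI
      push_neg at hI
      have h := key (C / (∫ u, |g u - gHat u| * p u)) (div_pos hC hI)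
      rw [← hE] at h
      have heq : 1/(2*(C / (∫ u, |g u - gHat u| * p u))) * C
          = (∫ u, |g u - gHat u| * p u) / 2 := by
        field_simp
      rw [mul_zero, heq] at h
      linarith
    · have ha : 0 < Real.sqrt C := Real.sqrt_pos.mpr hC
      have hb : 0 < Real.sqrt E := Real.sqrt_pos.mpr hE
      have hsC : Real.sqrt C * Real.sqrt C = C := Real.mul_self_sqrt hC.le
      have hsE : Real.sqrt E * Real.sqrt E = E := Real.mul_self_sqrt hE.le
      have h := key (Real.sqrt C / Real.sqrt E) (div_pos ha hb)
      have heq : Real.sqrt C / Real.sqrt E / 2 * E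
          + 1/(2*(Real.sqrt C / Real.sqrt E)) * C = Real.sqrt C * Real.sqrt E := by
        field_simp
        linear_combination (E - 2 * Real.sqrt E * Real.sqrt E) * hsC + (-C) * hsE
      linarith
  -- TV bound
  have htv : tvDist
      (volume.withDensity fun u => ENNReal.ofReal (stdNormalCDF (-(g u) / σ) * p u / Z1))
      (volume.withDensity fun u => ENNReal.ofReal (stdNormalCDF (-(gHat u) / σ) * p u / Z2))
      ≤ ∫ u, |stdNormalCDF (-(g u) / σ) * p u / Z1 - stdNormalCDF (-(gHat u) / σ) * p u / Z2| :=
    tv_withDensity_le volume _ _ hf1Int hf2Int hf1nn hf2nn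
  have hDint : Integrable fun u =>
      |stdNormalCDF (-(g u) / σ) - stdNormalCDF (-(gHat u) / σ)| * p u := by
    refine hpInt.mono (((hm1.sub hm2).abs.mul hp).aestronglyMeasurable) ?_
    filter_upwards with u
    rw [Real.norm_eq_abs, Real.norm_eq_abs, abs_mul, abs_abs, abs_of_nonneg (hp0 u)]
    refine mul_le_of_le_one_left (hp0 u) ?_
    have b1 := stdNormalCDF_nonneg (-(g u) / σ)
    have b2 := stdNormalCDF_le_one (-(g u) / σ)
    have b3 := stdNormalCDF_nonneg (-(gHat u) / σ)
    have b4 := stdNormalCDF_le_one (-(gHat u) / σ)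
    rw [abs_sub_le_iff]
    constructor <;> linarith
  have hD0 : 0 ≤ ∫ u, |stdNormalCDF (-(g u) / σ) - stdNormalCDF (-(gHat u) / σ)| * p u :=
    integral_nonneg fun u => mul_nonneg (abs_nonneg _) (hp0 u)
  have hdiff : (∫ u, |stdNormalCDF (-(g u) / σ) * p u / Z1
        - stdNormalCDF (-(gHat u) / σ) * p u / Z2|)
      ≤ 2 / z * ∫ u, |stdNormalCDF (-(g u) / σ) - stdNormalCDF (-(gHat u) / σ)| * p u := by
    have hpt : ∀ u, |stdNormalCDF (-(g u) / σ) * p u / Z1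
          - stdNormalCDF (-(gHat u) / σ) * p u / Z2|
        ≤ |stdNormalCDF (-(g u) / σ) - stdNormalCDF (-(gHat u) / σ)| * p u / Z1
          + stdNormalCDF (-(gHat u) / σ) * p u * |1/Z1 - 1/Z2| := by
      intro u
      have decomp : stdNormalCDF (-(g u) / σ) * p u / Z1
            - stdNormalCDF (-(gHat u) / σ) * p u / Z2
          = (stdNormalCDF (-(g u) / σ) - stdNormalCDF (-(gHat u) / σ)) * p u / Z1
            + stdNormalCDF (-(gHat u) / σ) * p u * (1/Z1 - 1/Z2) := by
        field_simp
        ring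
      rw [decomp]
      refine (abs_add_le _ _).trans ?_
      refine add_le_add ?_ ?_
      · rw [abs_div, abs_of_pos hZ1, abs_mul, abs_of_nonneg (hp0 u)]
      · rw [abs_mul, abs_of_nonneg (mul_nonneg (stdNormalCDF_nonneg _) (hp0 u))]
    have hint1 : Integrable fun u =>
        |stdNormalCDF (-(g u) / σ) - stdNormalCDF (-(gHat u) / σ)| * p u / Z1 :=
      hDint.div_const Z1
    have hint2 : Integrable fun u =>
        stdNormalCDF (-(gHat u) / σ) * p u * |1/Z1 - 1/Z2| := hInt2.mul_const _
    have step := integral_mono ((hf1Int.sub hf2Int).abs) (hint1.add hint2) hpt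
    simp only [Pi.sub_apply, Pi.add_apply] at step
    rw [integral_add hint1 hint2, integral_div, integral_mul_const] at step
    rw [← hZ2def] at step
    have hZle : |Z2 - Z1|
        ≤ ∫ u, |stdNormalCDF (-(g u) / σ) - stdNormalCDF (-(gHat u) / σ)| * p u := by
      rw [hZ1def, hZ2def, ← integral_sub hInt2 hInt1]
      have hni : ‖∫ u, (stdNormalCDF (-(gHat u) / σ) * p u
            - stdNormalCDF (-(g u) / σ) * p u)‖
          ≤ ∫ u, ‖stdNormalCDF (-(gHat u) / σ) * p u
            - stdNormalCDF (-(g u) / σ) * p u‖ :=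
        norm_integral_le_integral_norm _
      simp only [Real.norm_eq_abs] at hni
      refine hni.trans ?_
      refine integral_mono ((hInt2.sub hInt1).abs) hDint fun u => ?_
      rw [← sub_mul, abs_mul, abs_of_nonneg (hp0 u), abs_sub_comm]
    have hZ2abs : Z2 * |1/Z1 - 1/Z2| = |Z2 - Z1| / Z1 := by
      have e1 : Z2 * |1/Z1 - 1/Z2| = |Z2 * (1/Z1 - 1/Z2)| := by
        rw [abs_mul, abs_of_pos hZ2]
      have e2 : Z2 * (1/Z1 - 1/Z2) = (Z2 - Z1) / Z1 := by
        field_simp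
      rw [e1, e2, abs_div, abs_of_pos hZ1]
    rw [hZ2abs] at step
    have h1 : |Z2 - Z1| / Z1
        ≤ (∫ u, |stdNormalCDF (-(g u) / σ) - stdNormalCDF (-(gHat u) / σ)| * p u) / Z1 := by
      gcongr
    have h2 : (∫ u, |stdNormalCDF (-(g u) / σ) - stdNormalCDF (-(gHat u) / σ)| * p u) / Z1
        ≤ (∫ u, |stdNormalCDF (-(g u) / σ) - stdNormalCDF (-(gHat u) / σ)| * p u) / z :=
      div_le_div_of_nonneg_left hD0 hz hZstar
    have h3 : 2 / z * (∫ u, |stdNormalCDF (-(g u) / σ) - stdNormalCDF (-(gHat u) / σ)| * p u)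
        = (∫ u, |stdNormalCDF (-(g u) / σ) - stdNormalCDF (-(gHat u) / σ)| * p u) / z
          + (∫ u, |stdNormalCDF (-(g u) / σ) - stdNormalCDF (-(gHat u) / σ)| * p u) / z := by
      ring
    linarith
  have hD : (∫ u, |stdNormalCDF (-(g u) / σ) - stdNormalCDF (-(gHat u) / σ)| * p u)
      ≤ (σ * Real.sqrt (2 * Real.pi))⁻¹ * ∫ u, |g u - gHat u| * p u := by
    calc (∫ u, |stdNormalCDF (-(g u) / σ) - stdNormalCDF (-(gHat u) / σ)| * p u)
        ≤ ∫ u, (σ * Real.sqrt (2 * Real.pi))⁻¹ * (|g u - gHat u| * p u) := by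
          refine integral_mono hDint (hIint.const_mul _) fun u => ?_
          have lip := stdNormalCDF_lipschitz (-(g u) / σ) (-(gHat u) / σ)
          rw [show -(g u) / σ - -(gHat u) / σ = -((g u - gHat u) / σ) by ring,
            abs_neg, abs_div, abs_of_pos hσ] at lip
          have step1 : |stdNormalCDF (-(g u) / σ) - stdNormalCDF (-(gHat u) / σ)| * p u
              ≤ (Real.sqrt (2 * Real.pi))⁻¹ * (|g u - gHat u| / σ) * p u :=
            mul_le_mul_of_nonneg_right lip (hp0 u)
          refine step1.trans (le_of_eq ?_)
          rw [mul_inv]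
          ring
      _ = (σ * Real.sqrt (2 * Real.pi))⁻¹ * ∫ u, |g u - gHat u| * p u :=
          integral_const_mul _ _
  refine le_trans (hProj _ _ hprob1 hprob2) ?_
  have hc1 : (0:ℝ) ≤ 2 / z := div_nonneg (by norm_num) hz.le
  have hc2 : (0:ℝ) ≤ (σ * Real.sqrt (2 * Real.pi))⁻¹ :=
    inv_nonneg.mpr (mul_nonneg hσ.le hsq.le)
  have hb : tvDist
      (volume.withDensity fun u => ENNReal.ofReal (stdNormalCDF (-(g u) / σ) * p u / Z1))
      (volume.withDensity fun u => ENNReal.ofReal (stdNormalCDF (-(gHat u) / σ) * p u / Z2))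
      ≤ 2 / z * ((σ * Real.sqrt (2 * Real.pi))⁻¹ * (Real.sqrt C * Real.sqrt E)) := by
    refine htv.trans (hdiff.trans ?_)
    refine mul_le_mul_of_nonneg_left (hD.trans ?_) hc1
    exact mul_le_mul_of_nonneg_left hImain hc2
  refine le_trans (mul_le_mul_of_nonneg_left hb hL0) (le_of_eq ?_)
  have h1 : z ≠ 0 := hz.ne'
  have h2 : σ ≠ 0 := hσ.ne'
  have h3 : Real.sqrt (2 * Real.pi) ≠ 0 := hsq.ne'
  field_simp
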